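/- Let μ be a probability measure on ℝ with finite first moment, F its CDF and F⁻¹ its quantile function, and let 0 ≤ τ < τ' ≤ 1 with m = (τ + τ')/2 ∈ (0,1]. Then θ* = F⁻¹(m) is a minimizer over θ ∈ ℝ of the function g(θ) = ∫_τ^{τ'} |F⁻¹(ω) − θ| dω; moreover, every θ ∈ ℝ satisfying F(θ) = m is also a minimizer of g. -/

import Mathlib

open MeasureTheory Set

/-- The CDF of a measure on ℝ: `F(y) = μ((-∞, y])`. -/
noncomputable def cdfFn (μ : Measure ℝ) (y : ℝ) : ℝ := (μ (Iic y)).toReal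

/-- The quantile function (generalized inverse CDF): `F⁻¹(ω) = inf {y | ω ≤ F(y)}`. -/
noncomputable def quantileFn (μ : Measure ℝ) (ω : ℝ) : ℝ := sInf {y : ℝ | ω ≤ cdfFn μ y}

section Aux

variable (μ : Measure ℝ) [IsProbabilityMeasure μ]

lemma cdfFn_eq' : cdfFn μ = ⇑(ProbabilityTheory.cdf μ) :=
  funext fun y => (ProbabilityTheory.cdf_eq_real μ y).symm

lemma cdfFn_mono : Monotone (cdfFn μ) := by
  rw [cdfFn_eq']; exact (ProbabilityTheory.cdf μ).mono

lemma exists_cdf_ge {ω : ℝ} (hω : ω < 1) : ∃ y, ω ≤ cdfFn μ y := by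
  have h : ∀ᶠ y in Filter.atTop, ω < ProbabilityTheory.cdf μ y :=
    (ProbabilityTheory.tendsto_cdf_atTop μ).eventually (eventually_gt_nhds hω)
  obtain ⟨y, hy⟩ := h.exists
  exact ⟨y, by rw [cdfFn_eq']; exact hy.le⟩

lemma bddBelow_quantileSet {ω : ℝ} (hω : 0 < ω) : BddBelow {y : ℝ | ω ≤ cdfFn μ y} := by
  have h : ∀ᶠ y in Filter.atBot, ProbabilityTheory.cdf μ y < ω :=
    (ProbabilityTheory.tendsto_cdf_atBot μ).eventually (eventually_lt_nhds hω)
  obtain ⟨y₀, hy₀⟩ := h.exists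
  refine ⟨y₀, fun y hy => ?_⟩
  by_contra hc
  push_neg at hc
  have h2 : cdfFn μ y ≤ cdfFn μ y₀ := cdfFn_mono μ hc.le
  rw [cdfFn_eq'] at h2 hy
  exact absurd (hy.trans h2) (not_le.2 hy₀)

lemma le_cdfFn_quantileFn {ω : ℝ} (h0 : 0 < ω) (h1 : ω < 1) :
    ω ≤ cdfFn μ (quantileFn μ ω) := by
  set S := {y : ℝ | ω ≤ cdfFn μ y} with hS
  have hne : S.Nonempty := exists_cdf_ge μ h1
  have hbd : BddBelow S := bddBelow_quantileSet μ h0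
  have hIoi : ∀ z, sInf S < z → ω ≤ cdfFn μ z := by
    intro z hz
    obtain ⟨y, hyS, hyz⟩ := (csInf_lt_iff hbd hne).1 hz
    exact hyS.trans (cdfFn_mono μ hyz.le)
  have hrc : Filter.Tendsto (cdfFn μ) (nhdsWithin (sInf S) (Ioi (sInf S)))
      (nhds (cdfFn μ (sInf S))) := by
    rw [cdfFn_eq']
    exact ((ProbabilityTheory.cdf μ).right_continuous (sInf S)).mono_left
      (nhdsWithin_mono _ Ioi_subset_Ici_self)
  have : quantileFn μ ω = sInf S := rfl
  rw [this]
  refine ge_of_tendsto hrc ?_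
  filter_upwards [self_mem_nhdsWithin] with z hz
  exact hIoi z hz

lemma quantileFn_le_iff {ω y : ℝ} (h0 : 0 < ω) (h1 : ω < 1) :
    quantileFn μ ω ≤ y ↔ ω ≤ cdfFn μ y := by
  constructor
  · intro h
    exact (le_cdfFn_quantileFn μ h0 h1).trans (cdfFn_mono μ h)
  · intro h
    exact csInf_le (bddBelow_quantileSet μ h0) h

lemma quantileFn_mono {a b : ℝ} (h0 : 0 < a) (hab : a ≤ b) (h1 : b < 1) :
    quantileFn μ a ≤ quantileFn μ b :=
  csInf_le_csInf (bddBelow_quantileSet μ h0) (exists_cdf_ge μ h1)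
    (fun _ hy => le_trans hab hy)

lemma measurable_indicator_quantileFn :
    Measurable ((Ioo (0:ℝ) 1).indicator (quantileFn μ)) := by
  apply measurable_of_Iic
  intro t
  by_cases ht : (0:ℝ) ≤ t
  · have : (Ioo (0:ℝ) 1).indicator (quantileFn μ) ⁻¹' Iic t =
        (Ioo (0:ℝ) 1 ∩ Iic (cdfFn μ t)) ∪ (Ioo (0:ℝ) 1)ᶜ := by
      ext ω
      by_cases hω : ω ∈ Ioo (0:ℝ) 1
      · simp [indicator_of_mem hω, hω, quantileFn_le_iff μ hω.1 hω.2]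
      · simp [indicator_of_notMem hω, hω, ht]
    rw [this]
    exact ((measurableSet_Ioo.inter measurableSet_Iic).union measurableSet_Ioo.compl)
  · have : (Ioo (0:ℝ) 1).indicator (quantileFn μ) ⁻¹' Iic t =
        Ioo (0:ℝ) 1 ∩ Iic (cdfFn μ t) := by
      ext ω
      by_cases hω : ω ∈ Ioo (0:ℝ) 1
      · simp [indicator_of_mem hω, hω, quantileFn_le_iff μ hω.1 hω.2]
      · simp [indicator_of_notMem hω, hω, ht]
    rw [this]
    exact measurableSet_Ioo.inter measurableSet_Iic

end Aux

/-- Core lemma: a midpoint-type minimizer for the L¹ deviation of a function that sits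
below `θs` on the left half and above `θs` on the right half. -/
lemma core_min {f : ℝ → ℝ} {τ m τ' θs θ : ℝ} (h1 : τ < m) (h2 : m < τ')
    (hmm : m - τ = τ' - m) (hf : IntegrableOn f (Ioc τ τ'))
    (hA : ∀ ω ∈ Ioo τ m, f ω ≤ θs) (hB : ∀ ω ∈ Ioo m τ', θs ≤ f ω) :
    ∫ ω in Ioc τ τ', |f ω - θs| ≤ ∫ ω in Ioc τ τ', |f ω - θ| := by
  have hsub1 : Ioc τ m ⊆ Ioc τ τ' := Ioc_subset_Ioc_right h2.le
  have hsub2 : Ioc m τ' ⊆ Ioc τ τ' := Ioc_subset_Ioc_left h1.le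
  have habs : ∀ c : ℝ, IntegrableOn (fun ω => |f ω - c|) (Ioc τ τ') := fun c =>
    (hf.sub (integrableOn_const measure_Ioc_lt_top.ne)).abs
  set D : ℝ → ℝ := fun ω => |f ω - θ| - |f ω - θs| with hD_def
  have hD : IntegrableOn D (Ioc τ τ') := (habs θ).sub (habs θs)
  have hbound : ∀ ω, -|θ - θs| ≤ D ω := by
    intro ω
    have h5 := abs_sub_abs_le_abs_sub (f ω - θs) (f ω - θ)
    have h6 : (f ω - θs) - (f ω - θ) = θ - θs := by ring
    rw [h6] at h5
    simp only [hD_def]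
    linarith
  have hsplit : ∫ ω in Ioc τ τ', D ω = (∫ ω in Ioo τ m, D ω) + ∫ ω in Ioo m τ', D ω := by
    rw [← Ioc_union_Ioc_eq_Ioc h1.le h2.le,
      setIntegral_union (Set.Ioc_disjoint_Ioc_of_le le_rfl) measurableSet_Ioc
        (hD.mono_set hsub1) (hD.mono_set hsub2),
      integral_Ioc_eq_integral_Ioo, integral_Ioc_eq_integral_Ioo]
  have key : 0 ≤ ∫ ω in Ioc τ τ', D ω := by
    rcases le_total θs θ with hc | hc
    · have habsθ : |θ - θs| = θ - θs := abs_of_nonneg (by linarith)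
      have e1 : ∫ ω in Ioo τ m, D ω = (m - τ) * (θ - θs) := by
        rw [setIntegral_congr_fun measurableSet_Ioo (g := fun _ => θ - θs) ?_,
          setIntegral_const, Real.volume_real_Ioo_of_le (by linarith),
          smul_eq_mul]
        intro ω hω
        have h3 := hA ω hω
        simp only [hD_def]
        rw [abs_of_nonpos (by linarith), abs_of_nonpos (by linarith)]
        ring
      have e2 : -((τ' - m) * (θ - θs)) ≤ ∫ ω in Ioo m τ', D ω := by
        have := setIntegral_mono_on
          (integrableOn_const measure_Ioo_lt_top.ne)
          ((hD.mono_set hsub2).mono_set Ioo_subset_Ioc_self)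
          measurableSet_Ioo (g := D) (f := fun _ => -(θ - θs))
          (fun ω _ => habsθ ▸ hbound ω)
        rw [setIntegral_const, Real.volume_real_Ioo_of_le (by linarith),
          smul_eq_mul] at this
        linarith
      rw [hsplit, hmm] at *
      linarith
    · have habsθ : |θ - θs| = θs - θ := by rw [abs_of_nonpos (by linarith : θ - θs ≤ 0)]; ring
      have e1 : ∫ ω in Ioo m τ', D ω = (τ' - m) * (θs - θ) := by
        rw [setIntegral_congr_fun measurableSet_Ioo (g := fun _ => θs - θ) ?_,
          setIntegral_const, Real.volume_real_Ioo_of_le (by linarith),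
          smul_eq_mul]
        intro ω hω
        have h3 := hB ω hω
        simp only [hD_def]
        rw [abs_of_nonneg (by linarith), abs_of_nonneg (by linarith)]
        ring
      have e2 : -((m - τ) * (θs - θ)) ≤ ∫ ω in Ioo τ m, D ω := by
        have := setIntegral_mono_on
          (integrableOn_const measure_Ioo_lt_top.ne)
          ((hD.mono_set hsub1).mono_set Ioo_subset_Ioc_self)
          measurableSet_Ioo (g := D) (f := fun _ => -(θs - θ))
          (fun ω _ => habsθ ▸ hbound ω)
        rw [setIntegral_const, Real.volume_real_Ioo_of_le (by linarith),
          smul_eq_mul] at this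
        linarith
      rw [hsplit, hmm] at *
      linarith
  have hdiff : ∫ ω in Ioc τ τ', D ω
      = (∫ ω in Ioc τ τ', |f ω - θ|) - ∫ ω in Ioc τ τ', |f ω - θs| :=
    integral_sub (habs θ) (habs θs)
  linarith [hdiff ▸ key]

theorem quantile_midpoint_minimizer
    (μ : Measure ℝ) [IsProbabilityMeasure μ] (hint : Integrable (fun x : ℝ => x) μ)
    (τ τ' : ℝ) (hτ : 0 ≤ τ) (hττ' : τ < τ') (hτ' : τ' ≤ 1)
    (m : ℝ) (hm : m = (τ + τ') / 2) (hm' : m ∈ Set.Ioc (0 : ℝ) 1) :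
    (∀ θ : ℝ,
      (∫ ω in τ..τ', |quantileFn μ ω - quantileFn μ m|) ≤ ∫ ω in τ..τ', |quantileFn μ ω - θ|) ∧
    (∀ θ₀ : ℝ, cdfFn μ θ₀ = m →
      ∀ θ : ℝ,
        (∫ ω in τ..τ', |quantileFn μ ω - θ₀|) ≤ ∫ ω in τ..τ', |quantileFn μ ω - θ|) := by
  have hm0 : 0 < m := hm'.1
  have hτm : τ < m := by rw [hm]; linarith
  have hmτ' : m < τ' := by rw [hm]; linarith
  have hm1 : m < 1 := lt_of_lt_of_le hmτ' hτ'
  have hmm : m - τ = τ' - m := by rw [hm]; ring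
  -- a.e. strong measurability of the quantile function on the interval
  have hqae : AEStronglyMeasurable (quantileFn μ) (volume.restrict (Ioc τ τ')) := by
    refine (measurable_indicator_quantileFn μ).aestronglyMeasurable.restrict.congr ?_
    have h2 : ∀ᵐ (ω : ℝ) ∂(volume.restrict (Ioc τ τ')), ω ≠ τ' := by
      refine ae_restrict_of_ae ?_
      refine ae_iff.2 ?_
      simp [Real.volume_singleton]
    filter_upwards [ae_restrict_mem measurableSet_Ioc, h2] with ω hω homega
    have hω01 : ω ∈ Ioo (0:ℝ) 1 :=
      ⟨lt_of_le_of_lt hτ hω.1, lt_of_lt_of_le (lt_of_le_of_ne hω.2 homega) hτ'⟩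
    exact indicator_of_mem hω01 _
  have main : ∀ θs : ℝ, (∀ ω ∈ Ioo τ m, quantileFn μ ω ≤ θs) →
      (∀ ω ∈ Ioo m τ', θs ≤ quantileFn μ ω) →
      ∀ θ : ℝ, (∫ ω in τ..τ', |quantileFn μ ω - θs|) ≤ ∫ ω in τ..τ', |quantileFn μ ω - θ| := by
    intro θs hA hB θ
    rw [intervalIntegral.integral_of_le hττ'.le, intervalIntegral.integral_of_le hττ'.le]
    by_cases H : IntegrableOn (quantileFn μ) (Ioc τ τ') volume
    · exact core_min hτm hmτ' hmm H hA hB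
    · have hLHS : ¬ IntegrableOn (fun ω => |quantileFn μ ω - θs|) (Ioc τ τ') volume := by
        intro hI
        apply H
        have hconst : IntegrableOn (fun _ : ℝ => |θs|) (Ioc τ τ') volume :=
          integrableOn_const measure_Ioc_lt_top.ne
        refine Integrable.mono' (hI.add hconst) hqae ?_
        filter_upwards with ω
        rw [Real.norm_eq_abs]
        have h7 := abs_sub_abs_le_abs_sub (quantileFn μ ω) θs
        simp only [Pi.add_apply]
        linarith
      rw [integral_undef hLHS]
      exact setIntegral_nonneg measurableSet_Ioc (fun ω _ => abs_nonneg _)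
  constructor
  · intro θ
    refine main (quantileFn μ m) ?_ ?_ θ
    · intro ω hω
      exact quantileFn_mono μ (lt_of_le_of_lt hτ hω.1) hω.2.le hm1
    · intro ω hω
      exact quantileFn_mono μ hm0 hω.1.le (lt_of_lt_of_le hω.2 hτ')
  · intro θ₀ hθ₀ θ
    refine main θ₀ ?_ ?_ θ
    · intro ω hω
      have h0 : 0 < ω := lt_of_le_of_lt hτ hω.1
      exact csInf_le (bddBelow_quantileSet μ h0) (le_of_lt (hθ₀ ▸ hω.2))
    · intro ω hω
      have h0 : 0 < ω := lt_trans hm0 hω.1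
      have h1 : ω < 1 := lt_of_lt_of_le hω.2 hτ'
      by_contra hc
      push_neg at hc
      have := (quantileFn_le_iff μ h0 h1).1 hc.le
      rw [hθ₀] at this
      exact absurd hω.1 (not_lt.2 this)
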